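/- Let T be a finite rooted tree with positive edge weights w, and let t(u,v) denote the weighted path distance between nodes u and v. For two probability distributions μ, ν on the nodes of T, the tree Wasserstein distance ∑_{v} t(v, p(v)) |μ(T_v) − ν(T_v)| (where T_v is the subtree rooted at v and p(v) its parent) equals the 1-Wasserstein distance between μ and ν in the metric space (V, t). -/
import Mathlib


open scoped Classical

/-- `z` is an ancestor of `u` (equivalently, `u` lies in the subtree rooted at `z`)
for the parent map `p`. -/
def Desc {V : Type*} (p : V → V) (z u : V) : Prop := ∃ k, p^[k] u = z

/-- The weighted path metric on a rooted tree given by parent map `p` and edge weights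
`w v = t(v, p v)`: the edge `(z, p z)` lies on the path from `u` to `v` iff exactly one
of `u`, `v` lies in the subtree rooted at `z`. -/
noncomputable def treeDist {V : Type*} [Fintype V] (p : V → V) (w : V → ℝ) (u v : V) : ℝ :=
  ∑ z, if (Desc p z u ↔ Desc p z v) then 0 else w z

/-- Total mass placed by `μ` on the subtree rooted at `v`. -/
noncomputable def subtreeMass {V : Type*} [Fintype V] (p : V → V) (μ : V → ℝ) (v : V) : ℝ :=
  ∑ u, if Desc p v u then μ u else 0

/-- The tree Wasserstein distance `∑_v t(v, p v) |μ(T_v) − ν(T_v)|`. -/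
noncomputable def TWD {V : Type*} [Fintype V] (p : V → V) (w : V → ℝ) (μ ν : V → ℝ) : ℝ :=
  ∑ v, w v * |subtreeMass p μ v - subtreeMass p ν v|

section Lemmas

variable {V : Type*}

lemma desc_refl (p : V → V) (z : V) : Desc p z z := ⟨0, rfl⟩

lemma desc_trans {p : V → V} {a b c : V} (h1 : Desc p a b) (h2 : Desc p b c) : Desc p a c := by
  obtain ⟨k, hk⟩ := h1; obtain ⟨m, hm⟩ := h2
  exact ⟨k + m, by rw [Function.iterate_add_apply, hm, hk]⟩

lemma cycle_eq_root {p : V → V} {r : V} (hroot : p r = r) (hreach : ∀ v, ∃ k, p^[k] v = r)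
    {x : V} {m : ℕ} (hm : p^[m] x = x) (hm0 : m ≠ 0) : x = r := by
  obtain ⟨k, hk⟩ := hreach x
  have hmul : ∀ a : ℕ, p^[a * m] x = x := by
    intro a
    induction a with
    | zero => simp
    | succ a ih => rw [Nat.succ_mul, Function.iterate_add_apply, hm, ih]
  have hm1 : 1 ≤ m := Nat.one_le_iff_ne_zero.mpr hm0
  have hle : k ≤ (k + 1) * m := by nlinarith
  have h2 := hmul (k + 1)
  rw [show (k + 1) * m = ((k + 1) * m - k) + k by omega, Function.iterate_add_apply, hk] at h2
  rw [← h2]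
  exact Function.iterate_fixed hroot _

lemma desc_antisymm {p : V → V} {r : V} (hroot : p r = r) (hreach : ∀ v, ∃ k, p^[k] v = r)
    {a b : V} (h1 : Desc p a b) (h2 : Desc p b a) : a = b := by
  obtain ⟨k, hk⟩ := h1; obtain ⟨m, hm⟩ := h2
  rcases Nat.eq_zero_or_pos (m + k) with h | h
  · have hk0 : k = 0 := by omega
    rw [hk0] at hk; simpa using hk.symm
  · have hb : p^[m + k] b = b := by rw [Function.iterate_add_apply, hk, hm]
    have hbr : b = r := cycle_eq_root hroot hreach hb (by omega)
    have har : a = r := by rw [← hk, hbr, Function.iterate_fixed hroot]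
    rw [har, hbr]

lemma desc_parent_iff {p : V → V} (y z : V) :
    Desc p y z ↔ y = z ∨ Desc p y (p z) := by
  constructor
  · rintro ⟨k, hk⟩
    cases k with
    | zero => exact Or.inl (by simpa using hk.symm)
    | succ k => exact Or.inr ⟨k, by rw [← Function.iterate_succ_apply]; exact hk⟩
  · rintro (rfl | ⟨k, hk⟩)
    · exact ⟨0, rfl⟩
    · exact ⟨k + 1, by rw [Function.iterate_succ_apply]; exact hk⟩

lemma not_desc_parent {p : V → V} {r : V} (hroot : p r = r) (hreach : ∀ v, ∃ k, p^[k] v = r)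
    {z : V} (hz : z ≠ r) : ¬ Desc p z (p z) := by
  rintro ⟨k, hk⟩
  exact hz (cycle_eq_root hroot hreach (m := k + 1)
    (by rw [Function.iterate_succ_apply]; exact hk) (by omega))

lemma parent_ne {p : V → V} {r : V} (hroot : p r = r) (hreach : ∀ v, ∃ k, p^[k] v = r)
    {z : V} (hz : z ≠ r) : p z ≠ z := by
  intro h
  exact hz (cycle_eq_root hroot hreach (m := 1) (by simpa using h) one_ne_zero)

noncomputable def chi {V : Type*} (p : V → V) (z u : V) : ℝ := if Desc p z u then 1 else 0

lemma treeDist_eq [Fintype V] (p : V → V) (w : V → ℝ) (u v : V) :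
    treeDist p w u v = ∑ z, w z * |chi p z u - chi p z v| := by
  unfold treeDist chi
  refine Finset.sum_congr rfl fun z _ => ?_
  by_cases h1 : Desc p z u <;> by_cases h2 : Desc p z v <;> simp [h1, h2]

lemma treeDist_symm [Fintype V] (p : V → V) (w : V → ℝ) (u v : V) :
    treeDist p w u v = treeDist p w v u := by
  unfold treeDist
  exact Finset.sum_congr rfl fun z _ => if_congr Iff.comm rfl rfl

lemma treeDist_self [Fintype V] (p : V → V) (w : V → ℝ) (u : V) :
    treeDist p w u u = 0 := by
  simp [treeDist]

lemma subtreeMass_eq [Fintype V] (p : V → V) (μ : V → ℝ) (z : V) :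
    subtreeMass p μ z = ∑ u, μ u * chi p z u := by
  unfold subtreeMass chi
  refine Finset.sum_congr rfl fun u _ => ?_
  by_cases h : Desc p z u <;> simp [h]

lemma TWD_symm [Fintype V] (p : V → V) (w : V → ℝ) (μ ν : V → ℝ) :
    TWD p w μ ν = TWD p w ν μ := by
  unfold TWD
  exact Finset.sum_congr rfl fun v _ => by rw [abs_sub_comm]

lemma TWD_nonneg [Fintype V] (p : V → V) (w : V → ℝ) (hw0 : ∀ v, 0 ≤ w v) (μ ν : V → ℝ) :
    0 ≤ TWD p w μ ν :=
  Finset.sum_nonneg fun v _ => mul_nonneg (hw0 v) (abs_nonneg _)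


lemma chi_decomp [Fintype V] {p : V → V} {r : V} (hroot : p r = r)
    (hreach : ∀ v, ∃ k, p^[k] v = r) (u x : V) :
    chi p u x - ∑ c ∈ Finset.univ.filter (fun c => p c = u ∧ c ≠ u), chi p c x
      = if x = u then (1:ℝ) else 0 := by
  by_cases hxu : x = u
  · subst hxu
    have hsum : ∑ c ∈ Finset.univ.filter (fun c => p c = x ∧ c ≠ x), chi p c x = 0 := by
      refine Finset.sum_eq_zero fun c hc => ?_
      obtain ⟨-, hpc, hcx⟩ := Finset.mem_filter.mp hc
      have : ¬ Desc p c x := fun hd =>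
        hcx (desc_antisymm hroot hreach hd ⟨1, by simpa using hpc⟩)
      simp [chi, this]
    rw [hsum]
    simp [chi, desc_refl]
  · by_cases hd : Desc p u x
    · -- exactly one child of u is an ancestor of x
      have hex : ∃ k, p^[k] x = u := hd
      have hk0 : p^[Nat.find hex] x = u := Nat.find_spec hex
      have hk0pos : Nat.find hex ≠ 0 := by
        intro h0
        rw [h0] at hk0
        exact hxu (by simpa using hk0)
      set k0 := Nat.find hex with hk0def
      set c0 := p^[k0 - 1] x with hc0
      have hpc0 : p c0 = u := by
        have h := hk0
        rw [show k0 = k0 - 1 + 1 by omega, Function.iterate_succ_apply'] at h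
        exact h
      have hc0u : c0 ≠ u := by
        have := Nat.find_min hex (m := k0 - 1) (by omega)
        simpa [hc0] using this
      have hdc0 : Desc p c0 x := ⟨k0 - 1, hc0.symm⟩
      have huniq : ∀ c, p c = u → c ≠ u → Desc p c x → c = c0 := by
        rintro c hpc hcu ⟨m, hm⟩
        have hm1 : p^[m + 1] x = u := by
          rw [Function.iterate_succ_apply', hm, hpc]
        have hk0le : k0 ≤ m + 1 := Nat.find_min' hex hm1
        by_cases hj : m = k0 - 1
        · rw [hc0, ← hj, hm]
        · have hmk : k0 ≤ m := by omega
          have hcyc : p^[m - k0 + 1] u = u := by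
            have h3 : p^[(m - k0 + 1) + k0] x = p^[m + 1] x := by
              congr 1; omega
            rw [Function.iterate_add_apply, hk0] at h3
            rw [h3, hm1]
          have hur : u = r := cycle_eq_root hroot hreach hcyc (by omega)
          exfalso; apply hcu
          have hc : c = p^[m - k0] u := by
            rw [← hk0, ← Function.iterate_add_apply, show m - k0 + k0 = m by omega, hm]
          rw [hc, hur, Function.iterate_fixed hroot]
      have hsum : ∑ c ∈ Finset.univ.filter (fun c => p c = u ∧ c ≠ u), chi p c x = 1 := by
        rw [Finset.sum_eq_single c0]
        · simp [chi, hdc0]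
        · intro b hb hbne
          obtain ⟨-, hb1, hb2⟩ := Finset.mem_filter.mp hb
          have : ¬ Desc p b x := fun hdb => hbne (huniq b hb1 hb2 hdb)
          simp [chi, this]
        · intro hc0n
          exact absurd (Finset.mem_filter.mpr ⟨Finset.mem_univ _, hpc0, hc0u⟩) hc0n
      rw [hsum]
      simp [chi, hd, hxu]
    · have hsum : ∑ c ∈ Finset.univ.filter (fun c => p c = u ∧ c ≠ u), chi p c x = 0 := by
        refine Finset.sum_eq_zero fun c hc => ?_
        have hmem := Finset.mem_filter.mp hc
        have : ¬ Desc p c x := fun hdc =>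
          hd (desc_trans ⟨1, by simpa using hmem.2.1⟩ hdc)
        simp [chi, this]
      rw [hsum]
      simp [chi, hd, hxu]

lemma point_eq [Fintype V] {p : V → V} {r : V} (hroot : p r = r)
    (hreach : ∀ v, ∃ k, p^[k] v = r) (μ : V → ℝ) (u : V) :
    μ u = subtreeMass p μ u
      - ∑ c ∈ Finset.univ.filter (fun c => p c = u ∧ c ≠ u), subtreeMass p μ c := by
  have h1 : ∑ c ∈ Finset.univ.filter (fun c => p c = u ∧ c ≠ u), subtreeMass p μ c
      = ∑ x, μ x * ∑ c ∈ Finset.univ.filter (fun c => p c = u ∧ c ≠ u), chi p c x := by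
    simp_rw [subtreeMass_eq, Finset.mul_sum]
    rw [Finset.sum_comm]
  rw [h1, subtreeMass_eq, ← Finset.sum_sub_distrib]
  have h2 : ∀ x, μ x * chi p u x - μ x * ∑ c ∈ Finset.univ.filter (fun c => p c = u ∧ c ≠ u), chi p c x
      = μ x * (if x = u then 1 else 0) := by
    intro x
    rw [← mul_sub, chi_decomp hroot hreach]
  simp_rw [h2]
  rw [Finset.sum_congr rfl (fun x _ => mul_ite (x = u) (μ x) 1 0)]
  simp


lemma root_mass [Fintype V] {p : V → V} {r : V} (hreach : ∀ v, ∃ k, p^[k] v = r)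
    (μ : V → ℝ) : subtreeMass p μ r = ∑ v, μ v := by
  unfold subtreeMass
  exact Finset.sum_congr rfl fun u _ => if_pos (hreach u)

lemma mass_shift [Fintype V] {p : V → V} {r : V} (hroot : p r = r)
    (hreach : ∀ v, ∃ k, p^[k] v = r) {z : V} (hz : z ≠ r) (μ : V → ℝ) (δ : ℝ) (v : V) :
    subtreeMass p (fun x => μ x + (if x = p z then δ else 0) - (if x = z then δ else 0)) v
      = subtreeMass p μ v - (if v = z then δ else 0) := by
  unfold subtreeMass
  have hsplit : ∀ u : V,
      (if Desc p v u then μ u + (if u = p z then δ else 0) - (if u = z then δ else 0) else 0)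
      = (if Desc p v u then μ u else 0)
        + (if u = p z then (if Desc p v u then δ else 0) else 0)
        - (if u = z then (if Desc p v u then δ else 0) else 0) := by
    intro u
    have hpz : p z ≠ z := parent_ne hroot hreach hz
    split_ifs <;> ring
  simp_rw [hsplit]
  rw [Finset.sum_sub_distrib, Finset.sum_add_distrib, Finset.sum_ite_eq' Finset.univ (p z),
    Finset.sum_ite_eq' Finset.univ z]
  simp only [Finset.mem_univ, if_true]
  by_cases hvz : v = z
  · subst hvz
    have h1 : Desc p v v := desc_refl p v
    have h2 : ¬ Desc p v (p v) := not_desc_parent hroot hreach hz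
    simp [h1, h2]
  · have : Desc p v z ↔ Desc p v (p z) := by
      rw [desc_parent_iff]
      simp [fun h : v = z => hvz h]
    by_cases hd : Desc p v (p z)
    · simp [hd, this.mpr hd, hvz]
    · have hdz : ¬ Desc p v z := fun h => hd (this.mp h)
      simp [hd, hdz, hvz]

lemma treeDist_sub [Fintype V] {p : V → V} {r : V} (hroot : p r = r)
    (hreach : ∀ v, ∃ k, p^[k] v = r) (w : V → ℝ) {z : V} (hz : z ≠ r) (v : V) :
    treeDist p w z v - treeDist p w (p z) v = if Desc p z v then -w z else w z := by
  unfold treeDist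
  rw [← Finset.sum_sub_distrib]
  rw [Finset.sum_eq_single_of_mem z (Finset.mem_univ z) ?side]
  case side =>
    intro y _ hyz
    have hiff : Desc p y z ↔ Desc p y (p z) := by
      rw [desc_parent_iff]
      simp [hyz]
    rw [if_congr (iff_congr hiff Iff.rfl) rfl rfl]
    ring
  · have h1 : Desc p z z := desc_refl p z
    have h2 : ¬ Desc p z (p z) := not_desc_parent hroot hreach hz
    by_cases hd : Desc p z v <;> simp [h1, h2, hd]

lemma cost_lower [Fintype V] (p : V → V) (w : V → ℝ) (hw0 : ∀ v, 0 ≤ w v)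
    (μ ν : V → ℝ) (P : V → V → ℝ) (hP0 : ∀ u v, 0 ≤ P u v)
    (hrow : ∀ u, ∑ v, P u v = μ u) (hcol : ∀ v, ∑ u, P u v = ν v) :
    TWD p w μ ν ≤ ∑ u, ∑ v, P u v * treeDist p w u v := by
  have key : ∀ z, subtreeMass p μ z - subtreeMass p ν z
      = ∑ u, ∑ v, P u v * (chi p z u - chi p z v) := by
    intro z
    have hμ : subtreeMass p μ z = ∑ u, ∑ v, P u v * chi p z u := by
      rw [subtreeMass_eq]
      refine Finset.sum_congr rfl fun u _ => ?_
      rw [← hrow u, Finset.sum_mul]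
    have hν : subtreeMass p ν z = ∑ u, ∑ v, P u v * chi p z v := by
      rw [subtreeMass_eq]
      rw [Finset.sum_comm]
      refine Finset.sum_congr rfl fun v _ => ?_
      rw [← hcol v, Finset.sum_mul]
    rw [hμ, hν, ← Finset.sum_sub_distrib]
    refine Finset.sum_congr rfl fun u _ => ?_
    rw [← Finset.sum_sub_distrib]
    refine Finset.sum_congr rfl fun v _ => ?_
    ring
  have step1 : TWD p w μ ν ≤ ∑ z, w z * ∑ u, ∑ v, P u v * |chi p z u - chi p z v| := by
    unfold TWD
    refine Finset.sum_le_sum fun z _ => ?_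
    refine mul_le_mul_of_nonneg_left ?_ (hw0 z)
    rw [key z]
    calc |∑ u, ∑ v, P u v * (chi p z u - chi p z v)|
        ≤ ∑ u, |∑ v, P u v * (chi p z u - chi p z v)| := Finset.abs_sum_le_sum_abs _ _
      _ ≤ ∑ u, ∑ v, |P u v * (chi p z u - chi p z v)| :=
          Finset.sum_le_sum fun u _ => Finset.abs_sum_le_sum_abs _ _
      _ = ∑ u, ∑ v, P u v * |chi p z u - chi p z v| := by
          refine Finset.sum_congr rfl fun u _ => Finset.sum_congr rfl fun v _ => ?_
          rw [abs_mul, abs_of_nonneg (hP0 u v)]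
  have step2 : ∑ z, w z * ∑ u, ∑ v, P u v * |chi p z u - chi p z v|
      = ∑ u, ∑ v, P u v * treeDist p w u v := by
    simp_rw [treeDist_eq, Finset.mul_sum]
    rw [Finset.sum_comm]
    refine Finset.sum_congr rfl fun u _ => ?_
    rw [Finset.sum_comm]
    refine Finset.sum_congr rfl fun v _ => Finset.sum_congr rfl fun z _ => ?_
    ring
  exact step1.trans (le_of_eq step2)


lemma TWD_shift [Fintype V] {p : V → V} {r : V} (hroot : p r = r)
    (hreach : ∀ v, ∃ k, p^[k] v = r) (w : V → ℝ) {z : V} (hz : z ≠ r)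
    (μ ν : V → ℝ) {δ : ℝ} (hδ : δ = subtreeMass p μ z - subtreeMass p ν z) (hδpos : 0 < δ) :
    TWD p w (fun x => μ x + (if x = p z then δ else 0) - (if x = z then δ else 0)) ν
      = TWD p w μ ν - w z * δ := by
  unfold TWD
  have key : ∀ v, w v * |subtreeMass p
        (fun x => μ x + (if x = p z then δ else 0) - (if x = z then δ else 0)) v
        - subtreeMass p ν v|
      = w v * |subtreeMass p μ v - subtreeMass p ν v| - (if v = z then w z * δ else 0) := by
    intro v
    rw [mass_shift hroot hreach hz]
    by_cases hvz : v = z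
    · subst hvz
      rw [if_pos rfl, if_pos rfl]
      have h1 : subtreeMass p μ v - δ - subtreeMass p ν v = 0 := by rw [hδ]; ring
      rw [h1, show subtreeMass p μ v - subtreeMass p ν v = δ from hδ.symm, abs_of_pos hδpos]
      simp
    · rw [if_neg hvz, if_neg hvz]
      ring_nf
  simp_rw [key]
  rw [Finset.sum_sub_distrib, Finset.sum_ite_eq' Finset.univ z]
  simp

lemma step_lemma [Fintype V] (p : V → V) (w : V → ℝ) (r : V)
    (hroot : p r = r) (hreach : ∀ v, ∃ k, p^[k] v = r) (hw0 : ∀ v, 0 ≤ w v)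
    (μ ν : V → ℝ) (z : V) (hz : z ≠ r) (δ : ℝ)
    (hδ : δ = subtreeMass p μ z - subtreeMass p ν z)
    (hδpos : 0 < δ) (hμ0 : ∀ v, 0 ≤ μ v)
    (P' : V → V → ℝ) (hP'0 : ∀ u v, 0 ≤ P' u v)
    (hrow' : ∀ u, ∑ v, P' u v = μ u + (if u = p z then δ else 0) - (if u = z then δ else 0))
    (hcol' : ∀ v, ∑ u, P' u v = ν v)
    (hcost' : ∑ u, ∑ v, P' u v * treeDist p w u v
        ≤ TWD p w (fun x => μ x + (if x = p z then δ else 0) - (if x = z then δ else 0)) ν) :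
    ∃ P : V → V → ℝ, (∀ u v, 0 ≤ P u v) ∧ (∀ u, ∑ v, P u v = μ u) ∧
      (∀ v, ∑ u, P u v = ν v) ∧ ∑ u, ∑ v, P u v * treeDist p w u v ≤ TWD p w μ ν := by
  have hpz : p z ≠ z := parent_ne hroot hreach hz
  have hR : ∑ v, P' (p z) v = μ (p z) + δ := by
    rw [hrow' (p z), if_pos rfl, if_neg hpz]
    ring
  have hRpos : 0 < μ (p z) + δ := add_pos_of_nonneg_of_pos (hμ0 _) hδpos
  set α : ℝ := δ / (μ (p z) + δ) with hα
  have hα0 : 0 ≤ α := div_nonneg hδpos.le hRpos.le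
  have hα1 : α ≤ 1 := by
    rw [hα, div_le_one hRpos]
    linarith [hμ0 (p z)]
  have hαR : α * (μ (p z) + δ) = δ := div_mul_cancel₀ δ hRpos.ne'
  refine ⟨fun u v => P' u v + (if u = z then α * P' (p z) v else 0)
      - (if u = p z then α * P' (p z) v else 0), ?_, ?_, ?_, ?_⟩
  · intro u v
    dsimp only
    by_cases h1 : u = z
    · rw [if_pos h1, if_neg (fun h : u = p z => hpz ((h1.symm.trans h).symm))]
      have := hP'0 u v
      have := mul_nonneg hα0 (hP'0 (p z) v)
      linarith
    · rw [if_neg h1]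
      by_cases h2 : u = p z
      · subst h2
        rw [if_pos rfl]
        nlinarith [hP'0 (p z) v]
      · rw [if_neg h2]
        simpa using hP'0 u v
  · intro u
    dsimp only
    rw [Finset.sum_sub_distrib, Finset.sum_add_distrib]
    have e1 : (∑ v, if u = z then α * P' (p z) v else 0)
        = if u = z then δ else 0 := by
      split_ifs with h
      · rw [← Finset.mul_sum, hR, hαR]
      · simp
    have e2 : (∑ v, if u = p z then α * P' (p z) v else 0)
        = if u = p z then δ else 0 := by
      split_ifs with h
      · rw [← Finset.mul_sum, hR, hαR]
      · simp
    rw [e1, e2, hrow' u]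
    split_ifs <;> ring
  · intro v
    dsimp only
    rw [Finset.sum_sub_distrib, Finset.sum_add_distrib, Finset.sum_ite_eq' Finset.univ z,
      Finset.sum_ite_eq' Finset.univ (p z)]
    simp [hcol' v]
  · have pull : ∀ (a : V) (f : V → V → ℝ),
        (∑ u, ∑ v, if u = a then f u v else 0) = ∑ v, f a v := by
      intro a f
      have h : ∀ u : V, (∑ v, if u = a then f u v else 0)
          = if u = a then ∑ v, f u v else 0 := by
        intro u; split_ifs <;> simp
      simp_rw [h]
      rw [Finset.sum_ite_eq' Finset.univ a]
      simp
    have expand : ∑ u, ∑ v, (P' u v + (if u = z then α * P' (p z) v else 0)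
          - (if u = p z then α * P' (p z) v else 0)) * treeDist p w u v
        = (∑ u, ∑ v, P' u v * treeDist p w u v)
          + ((∑ u, ∑ v, if u = z then α * P' (p z) v * treeDist p w u v else 0)
          - (∑ u, ∑ v, if u = p z then α * P' (p z) v * treeDist p w u v else 0)) := by
      rw [← Finset.sum_sub_distrib, ← Finset.sum_add_distrib]
      refine Finset.sum_congr rfl fun u _ => ?_
      rw [← Finset.sum_sub_distrib, ← Finset.sum_add_distrib]
      refine Finset.sum_congr rfl fun v _ => ?_
      split_ifs <;> ring
    dsimp only
    rw [expand, pull z, pull (p z), ← Finset.sum_sub_distrib]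
    have hbound : ∑ v, (α * P' (p z) v * treeDist p w z v
          - α * P' (p z) v * treeDist p w (p z) v)
        ≤ δ * w z := by
      have hterm : ∀ v, α * P' (p z) v * treeDist p w z v
            - α * P' (p z) v * treeDist p w (p z) v
          ≤ α * P' (p z) v * w z := by
        intro v
        have hd : treeDist p w z v - treeDist p w (p z) v ≤ w z := by
          rw [treeDist_sub hroot hreach w hz]
          split_ifs
          · linarith [hw0 z]
          · exact le_rfl
        calc α * P' (p z) v * treeDist p w z v - α * P' (p z) v * treeDist p w (p z) v
            = α * P' (p z) v * (treeDist p w z v - treeDist p w (p z) v) := by ring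
          _ ≤ α * P' (p z) v * w z :=
              mul_le_mul_of_nonneg_left hd (mul_nonneg hα0 (hP'0 _ _))
      calc ∑ v, (α * P' (p z) v * treeDist p w z v - α * P' (p z) v * treeDist p w (p z) v)
          ≤ ∑ v, α * P' (p z) v * w z := Finset.sum_le_sum fun v _ => hterm v
        _ = α * (μ (p z) + δ) * w z := by
            have hcomm : ∀ v : V, α * P' (p z) v * w z = α * w z * P' (p z) v := fun v => by ring
            simp_rw [hcomm]
            rw [← Finset.mul_sum, hR]
            ring
        _ = δ * w z := by rw [hαR]
    have := TWD_shift hroot hreach w hz μ ν hδ hδpos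
    linarith [hcost', hbound, this]

lemma exists_opt [Fintype V] (p : V → V) (w : V → ℝ) (r : V)
    (hroot : p r = r) (hreach : ∀ v, ∃ k, p^[k] v = r) (hw0 : ∀ v, 0 ≤ w v) :
    ∀ (n : ℕ) (μ ν : V → ℝ), (∀ v, 0 ≤ μ v) → (∀ v, 0 ≤ ν v) →
      (∑ v, μ v = ∑ v, ν v) →
      (Finset.univ.filter fun v => subtreeMass p μ v ≠ subtreeMass p ν v).card ≤ n →
      ∃ P : V → V → ℝ, (∀ u v, 0 ≤ P u v) ∧ (∀ u, ∑ v, P u v = μ u) ∧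
        (∀ v, ∑ u, P u v = ν v) ∧ ∑ u, ∑ v, P u v * treeDist p w u v ≤ TWD p w μ ν := by
  intro n
  induction n with
  | zero =>
    intro μ ν hμ0 hν0 hsum hcard
    have hall : ∀ v, subtreeMass p μ v = subtreeMass p ν v := by
      intro v
      by_contra h
      have hmem : v ∈ Finset.univ.filter
          (fun v => subtreeMass p μ v ≠ subtreeMass p ν v) :=
        Finset.mem_filter.mpr ⟨Finset.mem_univ _, h⟩
      have := Finset.card_pos.mpr ⟨v, hmem⟩
      omega
    have hμν : μ = ν := by
      funext u
      rw [point_eq hroot hreach μ u, point_eq hroot hreach ν u, hall u]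
      congr 1
      exact Finset.sum_congr rfl fun c _ => hall c
    refine ⟨fun u v => if v = u then μ u else 0, ?_, ?_, ?_, ?_⟩
    · intro u v
      dsimp only
      split_ifs
      · exact hμ0 u
      · exact le_rfl
    · intro u
      simp
    · intro v
      dsimp only
      rw [← hμν, Finset.sum_ite_eq]
      simp
    · dsimp only
      have hc : ∑ u, ∑ v, (if v = u then μ u else 0) * treeDist p w u v = 0 := by
        refine Finset.sum_eq_zero fun u _ => Finset.sum_eq_zero fun v _ => ?_
        by_cases h : v = u
        · subst h
          rw [if_pos rfl, treeDist_self, mul_zero]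
        · rw [if_neg h, zero_mul]
      rw [hc]
      exact TWD_nonneg p w hw0 μ ν
  | succ n ih =>
    intro μ ν hμ0 hν0 hsum hcard
    by_cases hle : (Finset.univ.filter
        fun v => subtreeMass p μ v ≠ subtreeMass p ν v).card ≤ n
    · exact ih μ ν hμ0 hν0 hsum hle
    · set S := Finset.univ.filter (fun v => subtreeMass p μ v ≠ subtreeMass p ν v) with hS
      have hne : S.Nonempty := Finset.card_pos.mp (by omega)
      obtain ⟨z, hzS, hzmax⟩ := Finset.exists_max_image S
        (fun v => (Finset.univ.filter fun y => Desc p y v).card) hne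
      have hzne : subtreeMass p μ z ≠ subtreeMass p ν z := (Finset.mem_filter.mp hzS).2
      -- minimality: proper descendants of z have balanced subtrees
      have hmin : ∀ y, Desc p z y → y ≠ z → subtreeMass p μ y = subtreeMass p ν y := by
        intro y hzy hyz
        by_contra h
        have hyS : y ∈ S := Finset.mem_filter.mpr ⟨Finset.mem_univ _, h⟩
        have hle2 := hzmax y hyS
        have hsub : (Finset.univ.filter fun a => Desc p a z)
            ⊆ (Finset.univ.filter fun a => Desc p a y) := by
          intro a ha
          exact Finset.mem_filter.mpr ⟨Finset.mem_univ _,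
            desc_trans (Finset.mem_filter.mp ha).2 hzy⟩
        have hymem : y ∈ (Finset.univ.filter fun a => Desc p a y) :=
          Finset.mem_filter.mpr ⟨Finset.mem_univ _, desc_refl p y⟩
        have hynot : y ∉ (Finset.univ.filter fun a => Desc p a z) := by
          intro hmem
          exact hyz (desc_antisymm hroot hreach (Finset.mem_filter.mp hmem).2 hzy)
        have := Finset.card_lt_card (Finset.ssubset_iff_of_subset hsub |>.mpr ⟨y, hymem, hynot⟩)
        omega
      have hzr : z ≠ r := by
        rintro rfl
        exact hzne (by rw [root_mass hreach, root_mass hreach, hsum])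
      have hpoint : μ z - ν z = subtreeMass p μ z - subtreeMass p ν z := by
        rw [point_eq hroot hreach μ z, point_eq hroot hreach ν z]
        have hc : ∀ c ∈ Finset.univ.filter (fun c => p c = z ∧ c ≠ z),
            subtreeMass p μ c = subtreeMass p ν c := by
          intro c hc
          obtain ⟨-, hpc, hcz⟩ := Finset.mem_filter.mp hc
          exact hmin c ⟨1, by simpa using hpc⟩ hcz
        rw [Finset.sum_congr rfl hc]
        ring
      have hSerase : (S.erase z).card ≤ n := by
        rw [Finset.card_erase_of_mem hzS]
        omega
      have hpzz : p z ≠ z := parent_ne hroot hreach hzr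
      rcases (sub_ne_zero.mpr hzne).lt_or_gt with hneg | hpos
      · -- ν has the excess at z : apply the argument to (ν, μ) and transpose
        set ε := subtreeMass p ν z - subtreeMass p μ z with hεdef
        have hεpos : 0 < ε := by rw [hεdef]; linarith
        have hν'0 : ∀ x, 0 ≤ ν x + (if x = p z then ε else 0) - (if x = z then ε else 0) := by
          intro x
          by_cases h1 : x = z
          · have h2 : x ≠ p z := fun h => hpzz ((h1.symm.trans h).symm)
            rw [if_neg h2, if_pos h1, h1]
            have := hμ0 z
            rw [hεdef]
            linarith [hpoint]
          · rw [if_neg h1]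
            split_ifs with h2
            · linarith [hν0 x, hεpos.le]
            · simpa using hν0 x
        have hsum' : ∑ x, (ν x + (if x = p z then ε else 0) - (if x = z then ε else 0))
            = ∑ x, μ x := by
          rw [Finset.sum_sub_distrib, Finset.sum_add_distrib,
            Finset.sum_ite_eq' Finset.univ (p z), Finset.sum_ite_eq' Finset.univ z]
          simp [hsum]
        have hfilter : (Finset.univ.filter fun v =>
            subtreeMass p (fun x => ν x + (if x = p z then ε else 0) - (if x = z then ε else 0)) v
              ≠ subtreeMass p μ v) = S.erase z := by
          ext v
          simp only [Finset.mem_filter, Finset.mem_erase, Finset.mem_univ, true_and, hS]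
          rw [mass_shift hroot hreach hzr]
          by_cases hvz : v = z
          · subst hvz
            rw [if_pos rfl]
            constructor
            · intro h
              exfalso
              apply h
              rw [hεdef]
              ring
            · rintro ⟨h, -⟩
              exact absurd rfl h
          · rw [if_neg hvz]
            simp only [sub_zero]
            constructor
            · intro h
              exact ⟨hvz, fun he => h he.symm⟩
            · rintro ⟨-, h⟩
              exact fun he => h he.symm
        obtain ⟨P', h1, h2, h3, h4⟩ := ih
          (fun x => ν x + (if x = p z then ε else 0) - (if x = z then ε else 0)) μ
          hν'0 hμ0 hsum' (by rw [hfilter]; exact hSerase)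
        obtain ⟨Q, hQ0, hQr, hQc, hQcost⟩ := step_lemma p w r hroot hreach hw0 ν μ z hzr ε
          hεdef hεpos hν0 P' h1 (fun u => by simpa using h2 u) h3 h4
        refine ⟨fun u v => Q v u, fun u v => hQ0 v u, fun u => hQc u, fun v => hQr v, ?_⟩
        have htr : ∑ u, ∑ v, Q v u * treeDist p w u v
            = ∑ u, ∑ v, Q u v * treeDist p w u v := by
          rw [Finset.sum_comm]
          exact Finset.sum_congr rfl fun u _ => Finset.sum_congr rfl fun v _ => by
            rw [treeDist_symm]
        dsimp only
        rw [htr, TWD_symm p w μ ν]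
        exact hQcost
      · -- μ has the excess at z
        set δ := subtreeMass p μ z - subtreeMass p ν z with hδdef
        have hμ'0 : ∀ x, 0 ≤ μ x + (if x = p z then δ else 0) - (if x = z then δ else 0) := by
          intro x
          by_cases h1 : x = z
          · have h2 : x ≠ p z := fun h => hpzz ((h1.symm.trans h).symm)
            rw [if_neg h2, if_pos h1, h1]
            have := hν0 z
            rw [hδdef]
            linarith [hpoint]
          · rw [if_neg h1]
            split_ifs with h2
            · linarith [hμ0 x, hpos.le]
            · simpa using hμ0 x
        have hsum' : ∑ x, (μ x + (if x = p z then δ else 0) - (if x = z then δ else 0))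
            = ∑ x, ν x := by
          rw [Finset.sum_sub_distrib, Finset.sum_add_distrib,
            Finset.sum_ite_eq' Finset.univ (p z), Finset.sum_ite_eq' Finset.univ z]
          simp [hsum]
        have hfilter : (Finset.univ.filter fun v =>
            subtreeMass p (fun x => μ x + (if x = p z then δ else 0) - (if x = z then δ else 0)) v
              ≠ subtreeMass p ν v) = S.erase z := by
          ext v
          simp only [Finset.mem_filter, Finset.mem_erase, Finset.mem_univ, true_and, hS]
          rw [mass_shift hroot hreach hzr]
          by_cases hvz : v = z
          · subst hvz
            rw [if_pos rfl]
            constructor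
            · intro h
              exfalso
              apply h
              rw [hδdef]
              ring
            · rintro ⟨h, -⟩
              exact absurd rfl h
          · rw [if_neg hvz]
            simp [hvz]
        obtain ⟨P', h1, h2, h3, h4⟩ := ih
          (fun x => μ x + (if x = p z then δ else 0) - (if x = z then δ else 0)) ν
          hμ'0 hν0 hsum' (by rw [hfilter]; exact hSerase)
        exact step_lemma p w r hroot hreach hw0 μ ν z hzr δ hδdef hpos hμ0 P' h1
          (fun u => by simpa using h2 u) h3 h4

end Lemmas

/-- On a finite rooted tree with positive edge weights, the tree Wasserstein distance
equals the 1-Wasserstein distance between `μ` and `ν` in the metric space `(V, t)`. -/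
theorem stmt_4 {V : Type*} [Fintype V] (p : V → V) (w : V → ℝ) (r : V)
    (hroot : p r = r) (hreach : ∀ v, ∃ k, p^[k] v = r)
    (hw : ∀ v, v ≠ r → 0 < w v) (hwr : w r = 0)
    (μ ν : V → ℝ) (hμ0 : ∀ v, 0 ≤ μ v) (hν0 : ∀ v, 0 ≤ ν v)
    (hμ1 : ∑ v, μ v = 1) (hν1 : ∑ v, ν v = 1) :
    TWD p w μ ν =
      sInf {c | ∃ P : V → V → ℝ, (∀ u v, 0 ≤ P u v) ∧ (∀ u, ∑ v, P u v = μ u) ∧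
        (∀ v, ∑ u, P u v = ν v) ∧ c = ∑ u, ∑ v, P u v * treeDist p w u v} := by
  have hw0 : ∀ v, 0 ≤ w v := by
    intro v
    by_cases h : v = r
    · rw [h, hwr]
    · exact (hw v h).le
  have hsum : ∑ v, μ v = ∑ v, ν v := by rw [hμ1, hν1]
  obtain ⟨P, hP0, hrow, hcol, hcost⟩ := exists_opt p w r hroot hreach hw0
    (Finset.univ.filter fun v => subtreeMass p μ v ≠ subtreeMass p ν v).card
    μ ν hμ0 hν0 hsum le_rfl
  have hlb := cost_lower p w hw0 μ ν P hP0 hrow hcol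
  have heq : ∑ u, ∑ v, P u v * treeDist p w u v = TWD p w μ ν := le_antisymm hcost hlb
  have hmem : TWD p w μ ν ∈ {c | ∃ P : V → V → ℝ, (∀ u v, 0 ≤ P u v) ∧
      (∀ u, ∑ v, P u v = μ u) ∧ (∀ v, ∑ u, P u v = ν v) ∧
      c = ∑ u, ∑ v, P u v * treeDist p w u v} :=
    ⟨P, hP0, hrow, hcol, heq.symm⟩
  have hlow : ∀ c ∈ {c | ∃ P : V → V → ℝ, (∀ u v, 0 ≤ P u v) ∧
      (∀ u, ∑ v, P u v = μ u) ∧ (∀ v, ∑ u, P u v = ν v) ∧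
      c = ∑ u, ∑ v, P u v * treeDist p w u v}, TWD p w μ ν ≤ c := by
    rintro c ⟨Q, hQ0, hQr, hQc, rfl⟩
    exact cost_lower p w hw0 μ ν Q hQ0 hQr hQc
  exact le_antisymm (le_csInf ⟨_, hmem⟩ hlow) (csInf_le ⟨TWD p w μ ν, hlow⟩ hmem)
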